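/- (Fake uniformity of the Cayley–LMR distribution.) If X has the Beta(3/2, 3/2) distribution (the Cayley–LMR case κ = 1), then τ₂ = E(Z²) = 1/3; this is the same value as in the Haar-measure case κ = 0, i.e., as when X has the Beta(1/2, 3/2) distribution, for which E(Z²) = 1/3 as well. -/

import Mathlib

open MeasureTheory intervalIntegral
open scoped ENNReal

/-- The Lebesgue density of the `Beta(κ + 1/2, 3/2)` distribution on `[0,1]`:
`x ↦ x^{κ-1/2} (1-x)^{1/2} / B(κ+1/2, 3/2)`, where
`B(p,q) = Γ(p)Γ(q)/Γ(p+q)`. -/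
noncomputable def betaDensity (κ : ℝ) : ℝ → ℝ := fun x =>
  if x ∈ Set.Ioo (0 : ℝ) 1 then
    x ^ (κ - 1 / 2) * (1 - x) ^ ((1 : ℝ) / 2)
      / (Real.Gamma (κ + 1 / 2) * Real.Gamma (3 / 2) / Real.Gamma (κ + 2))
  else 0

lemma realBeta {p q : ℝ} (hp : 0 < p) (hq : 0 < q) :
    ∫ x in (0:ℝ)..1, x ^ (p-1) * (1 - x) ^ (q-1)
      = Real.Gamma p * Real.Gamma q / Real.Gamma (p + q) := by
  have h := Complex.Gamma_mul_Gamma_eq_betaIntegral (s := (p:ℂ)) (t := (q:ℂ))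
    (by simpa using hp) (by simpa using hq)
  have hβ : Complex.betaIntegral (p:ℂ) (q:ℂ)
      = ((∫ x in (0:ℝ)..1, x ^ (p-1) * (1 - x) ^ (q-1) : ℝ) : ℂ) := by
    rw [Complex.betaIntegral, ← intervalIntegral.integral_ofReal]
    refine intervalIntegral.integral_congr fun x hx => ?_
    rw [Set.uIcc_of_le zero_le_one] at hx
    rw [Complex.ofReal_mul, Complex.ofReal_cpow hx.1, Complex.ofReal_cpow (by linarith [hx.2] : (0:ℝ) ≤ 1 - x)]
    push_cast
    ring
  rw [hβ, Complex.Gamma_ofReal, Complex.Gamma_ofReal, ← Complex.ofReal_add,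
    Complex.Gamma_ofReal, ← Complex.ofReal_mul, ← Complex.ofReal_mul,
    Complex.ofReal_inj] at h
  have hne : Real.Gamma (p + q) ≠ 0 := (Real.Gamma_pos_of_pos (by linarith)).ne'
  field_simp
  linarith [h]

lemma betaII {p : ℝ} (hp : -1 < p) :
    IntervalIntegrable (fun x => x ^ p * (1 - x) ^ ((1:ℝ)/2)) volume 0 1 := by
  refine (intervalIntegral.intervalIntegrable_rpow' hp).mul_continuousOn ?_
  exact ((Real.continuous_rpow_const (by norm_num)).comp
    (continuous_const.sub continuous_id)).continuousOn

lemma Jval {p : ℝ} (hp : -1 < p) :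
    ∫ x in (0:ℝ)..1, x ^ p * (1 - x) ^ ((1:ℝ)/2)
      = Real.Gamma (p+1) * Real.Gamma (3/2) / Real.Gamma (p + 5/2) := by
  have := realBeta (p := p+1) (q := 3/2) (by linarith) (by norm_num)
  rw [show p + 1 - 1 = p by ring, show (3:ℝ)/2 - 1 = 1/2 by norm_num] at this
  rw [this]
  norm_num
  ring_nf

noncomputable def Jv (p : ℝ) : ℝ :=
  Real.Gamma (p+1) * Real.Gamma (3/2) / Real.Gamma (p + 5/2)

lemma betaDensity_nonneg {κ : ℝ} (hκ : 0 ≤ κ) (x : ℝ) : 0 ≤ betaDensity κ x := by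
  unfold betaDensity
  split
  · rename_i h
    have h1 : (0:ℝ) < Real.Gamma (κ + 1/2) := Real.Gamma_pos_of_pos (by linarith)
    have h2 : (0:ℝ) < Real.Gamma (3/2) := Real.Gamma_pos_of_pos (by norm_num)
    have h3 : (0:ℝ) < Real.Gamma (κ + 2) := Real.Gamma_pos_of_pos (by linarith)
    have := Real.rpow_nonneg h.1.le (κ - 1/2)
    have := Real.rpow_nonneg (by linarith [h.2] : (0:ℝ) ≤ 1 - x) ((1:ℝ)/2)
    positivity
  · exact le_refl 0

lemma betaDensity_measurable (κ : ℝ) : Measurable (betaDensity κ) := by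
  unfold betaDensity
  refine Measurable.ite measurableSet_Ioo ?_ measurable_const
  fun_prop

lemma genMoment (κ a b c : ℝ) (hκ : 0 ≤ κ) :
    ∫ x, betaDensity κ x * (a*x^2 + b*x + c) ∂volume
      = (a * Jv (κ+3/2) + b * Jv (κ+1/2) + c * Jv (κ-1/2))
          / (Real.Gamma (κ + 1/2) * Real.Gamma (3/2) / Real.Gamma (κ + 2)) := by
  set C : ℝ := Real.Gamma (κ + 1/2) * Real.Gamma (3/2) / Real.Gamma (κ + 2) with hC
  have hfun : (fun x => betaDensity κ x * (a*x^2 + b*x + c))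
      = Set.indicator (Set.Ioo (0:ℝ) 1)
          (fun x => (a/C) * (x ^ (κ+3/2) * (1-x) ^ ((1:ℝ)/2))
            + (b/C) * (x ^ (κ+1/2) * (1-x) ^ ((1:ℝ)/2))
            + (c/C) * (x ^ (κ-1/2) * (1-x) ^ ((1:ℝ)/2))) := by
    funext x
    rw [Set.indicator_apply]
    unfold betaDensity
    split
    · rename_i h
      have hx : (0:ℝ) < x := h.1
      have e2 : x ^ (κ+3/2) = x ^ (κ-1/2) * x^2 := by
        rw [show κ + 3/2 = (κ-1/2) + (2:ℕ) by push_cast; ring, Real.rpow_add hx,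
          Real.rpow_natCast]
      have e1 : x ^ (κ+1/2) = x ^ (κ-1/2) * x := by
        rw [show κ + 1/2 = (κ-1/2) + (1:ℕ) by push_cast; ring, Real.rpow_add hx,
          Real.rpow_natCast, pow_one]
      rw [e1, e2]
      ring
    · simp
  rw [hfun, MeasureTheory.integral_indicator measurableSet_Ioo, ← integral_Ioc_eq_integral_Ioo,
    ← intervalIntegral.integral_of_le zero_le_one]
  have i1 := betaII (p := κ+3/2) (by linarith)
  have i2 := betaII (p := κ+1/2) (by linarith)
  have i3 := betaII (p := κ-1/2) (by linarith)
  rw [intervalIntegral.integral_add (((i1.const_mul _).add (i2.const_mul _)))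
      (i3.const_mul _),
    intervalIntegral.integral_add (i1.const_mul _) (i2.const_mul _),
    intervalIntegral.integral_const_mul, intervalIntegral.integral_const_mul,
    intervalIntegral.integral_const_mul,
    Jval (by linarith : (-1:ℝ) < κ+3/2), Jval (by linarith : (-1:ℝ) < κ+1/2),
    Jval (by linarith : (-1:ℝ) < κ-1/2)]
  unfold Jv
  rw [show κ + 3/2 + 1 = κ + 5/2 by ring, show κ + 3/2 + 5/2 = κ + 4 by ring,
    show κ + 1/2 + 1 = κ + 3/2 by ring, show κ + 1/2 + 5/2 = κ + 3 by ring,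
    show κ - 1/2 + 1 = κ + 1/2 by ring, show κ - 1/2 + 5/2 = κ + 2 by ring]
  ring

lemma gamma_halves :
    Real.Gamma (3/2) = Real.sqrt Real.pi / 2 ∧
    Real.Gamma (5/2) = 3 * Real.sqrt Real.pi / 4 ∧
    Real.Gamma (7/2) = 15 * Real.sqrt Real.pi / 8 := by
  have g12 : Real.Gamma (1/2) = Real.sqrt Real.pi := Real.Gamma_one_half_eq
  have g32 : Real.Gamma (3/2) = Real.sqrt Real.pi / 2 := by
    rw [show (3:ℝ)/2 = 1/2 + 1 by norm_num, Real.Gamma_add_one (by norm_num), g12]; ring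
  have g52 : Real.Gamma (5/2) = 3 * Real.sqrt Real.pi / 4 := by
    rw [show (5:ℝ)/2 = 3/2 + 1 by norm_num, Real.Gamma_add_one (by norm_num), g32]; ring
  have g72 : Real.Gamma (7/2) = 15 * Real.sqrt Real.pi / 8 := by
    rw [show (7:ℝ)/2 = 5/2 + 1 by norm_num, Real.Gamma_add_one (by norm_num), g52]; ring
  exact ⟨g32, g52, g72⟩

lemma gamma_nats :
    Real.Gamma 2 = 1 ∧ Real.Gamma 3 = 2 ∧ Real.Gamma 4 = 6 ∧ Real.Gamma 5 = 24 := by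
  have h2 : Real.Gamma 2 = 1 := by
    simpa using Real.Gamma_nat_eq_factorial 1
  have h3 : Real.Gamma 3 = 2 := by
    simpa using Real.Gamma_nat_eq_factorial 2
  have h4 : Real.Gamma 4 = 6 := by
    simpa [Nat.factorial] using Real.Gamma_nat_eq_factorial 3
  have h5 : Real.Gamma 5 = 24 := by
    simpa [Nat.factorial] using Real.Gamma_nat_eq_factorial 4
  exact ⟨h2, h3, h4, h5⟩

lemma mval₁ (a b c : ℝ) :
    ∫ x, betaDensity 1 x * (a*x^2 + b*x + c) ∂volume = a*(5/16) + b*(1/2) + c := by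
  rw [genMoment 1 a b c zero_le_one]
  obtain ⟨g32, g52, g72⟩ := gamma_halves
  obtain ⟨h2, h3, h4, h5⟩ := gamma_nats
  unfold Jv
  norm_num [g32, g52, g72, h3, h4, h5]
  have hs : (0:ℝ) < Real.sqrt Real.pi := Real.sqrt_pos.mpr Real.pi_pos
  field_simp
  ring_nf
lemma mval₀ (a b c : ℝ) :
    ∫ x, betaDensity 0 x * (a*x^2 + b*x + c) ∂volume = a*(1/8) + b*(1/4) + c := by
  rw [genMoment 0 a b c le_rfl]
  obtain ⟨g32, g52, g72⟩ := gamma_halves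
  obtain ⟨h2, h3, h4, h5⟩ := gamma_nats
  unfold Jv
  norm_num [Real.Gamma_one_half_eq, g32, g52, g72, h2, h3, h4, h5]
  have hs : (0:ℝ) < Real.sqrt Real.pi := Real.sqrt_pos.mpr Real.pi_pos
  field_simp
  ring

lemma interval_poly₁ : ∫ t in (-1:ℝ)..1, t^4 = 2/5 := by
  rw [integral_pow]; norm_num

lemma interval_poly₂ : ∫ t in (-1:ℝ)..1, 2*t^2*(1-t^2) = 8/15 := by
  have : (fun t : ℝ => 2*t^2*(1-t^2)) = fun t : ℝ => 2*t^2 - 2*t^4 := by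
    funext t; ring
  rw [this, integral_sub
      ((intervalIntegrable_pow 2).const_mul 2)
      ((intervalIntegrable_pow 4).const_mul 2),
    intervalIntegral.integral_const_mul, intervalIntegral.integral_const_mul,
    integral_pow, integral_pow]
  norm_num

lemma interval_poly₃ : ∫ t in (-1:ℝ)..1, (1-t^2)^2 = 16/15 := by
  have : (fun t : ℝ => (1-t^2)^2) = fun t : ℝ => 1 - 2*t^2 + t^4 := by
    funext t; ring
  rw [this, integral_add
      ((_root_.intervalIntegrable_const (c := (1:ℝ)) (μ := volume) (a := (-1:ℝ)) (b := (1:ℝ))).sub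
        ((intervalIntegrable_pow 2).const_mul 2))
      (intervalIntegrable_pow 4),
    integral_sub (_root_.intervalIntegrable_const (c := (1:ℝ)) (μ := volume) (a := (-1:ℝ)) (b := (1:ℝ)))
      ((intervalIntegrable_pow 2).const_mul 2),
    intervalIntegral.integral_const_mul, integral_pow,
    integral_pow, intervalIntegral.integral_const]
  norm_num

/-- expectation of `f ∘ T` for `T` uniform on `[-1,1]`. -/
lemma unif_exp {Ω : Type*} [MeasurableSpace Ω] (P : Measure Ω) [IsProbabilityMeasure P]
    (T : Ω → ℝ) (hT : Measurable T)
    (hTu : Measure.map T P = (2 : ℝ≥0∞)⁻¹ • volume.restrict (Set.Icc (-1 : ℝ) 1))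
    (f : ℝ → ℝ) (hf : Continuous f) :
    ∫ ω, f (T ω) ∂P = (1/2) * ∫ t in (-1:ℝ)..1, f t := by
  rw [← integral_map hT.aemeasurable hf.aestronglyMeasurable, hTu,
    MeasureTheory.integral_smul_measure]
  rw [integral_of_le (by norm_num : (-1:ℝ) ≤ 1),
    ← integral_Icc_eq_integral_Ioc]
  simp [ENNReal.toReal_inv]
  try ring

set_option maxHeartbeats 1000000 in
lemma key (κ : ℝ) (hκ : 0 ≤ κ) {Ω : Type*} [MeasurableSpace Ω] (P : Measure Ω)
    [IsProbabilityMeasure P] (X T : Ω → ℝ) (hX : Measurable X) (hT : Measurable T)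
    (hXr : ∀ ω, X ω ∈ Set.Icc (0:ℝ) 1)
    (hTu : Measure.map T P = (2 : ℝ≥0∞)⁻¹ • volume.restrict (Set.Icc (-1 : ℝ) 1))
    (hindep : ProbabilityTheory.IndepFun X T P)
    (hlaw : Measure.map X P = volume.withDensity fun x => ENNReal.ofReal (betaDensity κ x)) :
    ∫ ω, (T ω ^ 2 + (1 - T ω ^ 2) * (2 * X ω - 1)) ^ 2 ∂P
      = 1/5 + (4/15) * (∫ x, betaDensity κ x * (2*x-1) ∂volume)
          + (8/15) * (∫ x, betaDensity κ x * (2*x-1)^2 ∂volume) := by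
  have hTae : ∀ᵐ ω ∂P, T ω ∈ Set.Icc (-1:ℝ) 1 := by
    rw [ae_iff]
    have h0 : P (T ⁻¹' (Set.Icc (-1:ℝ) 1)ᶜ) = 0 := by
      rw [← Measure.map_apply hT measurableSet_Icc.compl, hTu]
      simp [Measure.restrict_apply measurableSet_Icc.compl]
    exact h0
  have hXexp : ∀ g : ℝ → ℝ, Measurable g →
      ∫ ω, g (X ω) ∂P = ∫ x, betaDensity κ x * g x ∂volume := by
    intro g hg
    rw [← integral_map hX.aemeasurable hg.aestronglyMeasurable, hlaw]
    have h1 : (fun x => ENNReal.ofReal (betaDensity κ x))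
        = fun x => ((betaDensity κ x).toNNReal : ℝ≥0∞) := rfl
    rw [h1, integral_withDensity_eq_integral_smul
      (f := fun x => (betaDensity κ x).toNNReal)
      (Measurable.comp measurable_real_toNNReal (betaDensity_measurable κ))]
    congr 1; funext x
    simp [NNReal.smul_def, Real.coe_toNNReal _ (betaDensity_nonneg hκ x)]
  have hprod : ∀ (f g : ℝ → ℝ), Measurable f → Measurable g →
      ∫ ω, f (T ω) * g (X ω) ∂P = (∫ ω, f (T ω) ∂P) * ∫ ω, g (X ω) ∂P :=
    fun f g hf hg => hindep.symm.integral_fun_comp_mul_comp hT.aemeasurable hX.aemeasurable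
      hf.aestronglyMeasurable hg.aestronglyMeasurable
  have hXb : ∀ ω, |2 * X ω - 1| ≤ 1 := fun ω => by
    obtain ⟨h1, h2⟩ := hXr ω; rw [abs_le]; constructor <;> linarith
  have intTerm : ∀ F : Ω → ℝ, Measurable F → (∀ᵐ ω ∂P, ‖F ω‖ ≤ 4) → Integrable F P :=
    fun F hF hb => (integrable_const (4:ℝ)).mono' hF.aestronglyMeasurable hb
  have int1 : Integrable (fun ω => (T ω)^4) P := by
    refine intTerm _ (by fun_prop) ?_
    filter_upwards [hTae] with ω ⟨h1, h2⟩
    have ht2 : T ω^2 ≤ 1 := by nlinarith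
    rw [Real.norm_eq_abs, abs_le]
    constructor <;> nlinarith [sq_nonneg (T ω), sq_nonneg (T ω^2), ht2]
  have int2 : Integrable (fun ω => (2*(T ω)^2*(1-(T ω)^2)) * (2*X ω-1)) P := by
    refine intTerm _ (by fun_prop) ?_
    filter_upwards [hTae] with ω ⟨h1, h2⟩
    have hy := hXb ω
    rw [Real.norm_eq_abs, abs_mul]
    have ht2 : T ω^2 ≤ 1 := by nlinarith
    have h3 : |2*(T ω)^2*(1-(T ω)^2)| ≤ 2 := by
      rw [abs_le]; constructor <;> nlinarith [sq_nonneg (T ω), sq_nonneg (T ω^2), ht2]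
    nlinarith [abs_nonneg (2*(T ω)^2*(1-(T ω)^2)), abs_nonneg (2*X ω-1)]
  have int3 : Integrable (fun ω => ((1-(T ω)^2)^2) * (2*X ω-1)^2) P := by
    refine intTerm _ (by fun_prop) ?_
    filter_upwards [hTae] with ω ⟨h1, h2⟩
    have hy := hXb ω
    rw [Real.norm_eq_abs, abs_mul, abs_sq, abs_sq]
    have ht2 : T ω^2 ≤ 1 := by nlinarith
    have h3 : (1-(T ω)^2)^2 ≤ 1 := by nlinarith [sq_nonneg (T ω), ht2]
    have h4 : (2*X ω-1)^2 ≤ 1 := by nlinarith [abs_le.mp hy]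
    nlinarith [sq_nonneg (1-(T ω)^2), sq_nonneg (2*X ω-1)]
  have e : (fun ω => (T ω ^ 2 + (1 - T ω ^ 2) * (2 * X ω - 1)) ^ 2)
      = fun ω => (T ω)^4 + ((2*(T ω)^2*(1-(T ω)^2)) * (2*X ω-1)
          + ((1-(T ω)^2)^2) * (2*X ω-1)^2) := by
    funext ω; ring
  have int23 : Integrable (fun ω => 2 * T ω ^ 2 * (1 - T ω ^ 2) * (2 * X ω - 1)
      + (1 - T ω ^ 2) ^ 2 * (2 * X ω - 1) ^ 2) P := int2.add int3
  have hp2 : ∫ ω, 2 * T ω ^ 2 * (1 - T ω ^ 2) * (2 * X ω - 1) ∂P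
      = (∫ ω, 2 * T ω ^ 2 * (1 - T ω ^ 2) ∂P) * ∫ ω, (2 * X ω - 1) ∂P :=
    hprod (fun t => 2*t^2*(1-t^2)) (fun x => 2*x-1) (by fun_prop) (by fun_prop)
  have hp3 : ∫ ω, (1 - T ω ^ 2) ^ 2 * (2 * X ω - 1) ^ 2 ∂P
      = (∫ ω, (1 - T ω ^ 2) ^ 2 ∂P) * ∫ ω, (2 * X ω - 1) ^ 2 ∂P :=
    hprod (fun t => (1-t^2)^2) (fun x => (2*x-1)^2) (by fun_prop) (by fun_prop)
  have hu1 : ∫ ω, T ω ^ 4 ∂P = (1/2) * ∫ t in (-1:ℝ)..1, t^4 :=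
    unif_exp P T hT hTu (fun t => t^4) (by fun_prop)
  have hu2 : ∫ ω, 2 * T ω ^ 2 * (1 - T ω ^ 2) ∂P
      = (1/2) * ∫ t in (-1:ℝ)..1, 2*t^2*(1-t^2) :=
    unif_exp P T hT hTu (fun t => 2*t^2*(1-t^2)) (by fun_prop)
  have hu3 : ∫ ω, (1 - T ω ^ 2) ^ 2 ∂P = (1/2) * ∫ t in (-1:ℝ)..1, (1-t^2)^2 :=
    unif_exp P T hT hTu (fun t => (1-t^2)^2) (by fun_prop)
  have hx1 : ∫ ω, (2 * X ω - 1) ∂P = ∫ x, betaDensity κ x * (2*x-1) ∂volume :=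
    hXexp (fun x => 2*x-1) (by fun_prop)
  have hx2 : ∫ ω, (2 * X ω - 1) ^ 2 ∂P = ∫ x, betaDensity κ x * (2*x-1)^2 ∂volume :=
    hXexp (fun x => (2*x-1)^2) (by fun_prop)
  rw [e, integral_add int1 int23, integral_add int2 int3, hp2, hp3, hu1, hu2, hu3,
    hx1, hx2, interval_poly₁, interval_poly₂, interval_poly₃]
  ring


lemma momA : ∫ x, betaDensity 1 x * (2*x-1) ∂(volume : Measure ℝ) = 0 := by
  rw [show (fun x => betaDensity 1 x * (2*x-1))
      = fun x => betaDensity 1 x * (0*x^2 + 2*x + (-1)) from funext fun x => by ring,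
    mval₁]
  norm_num

lemma momB : ∫ x, betaDensity 1 x * (2*x-1)^2 ∂(volume : Measure ℝ) = 1/4 := by
  rw [show (fun x => betaDensity 1 x * (2*x-1)^2)
      = fun x => betaDensity 1 x * (4*x^2 + (-4)*x + 1) from funext fun x => by ring,
    mval₁]
  norm_num

lemma momC : ∫ x, betaDensity 0 x * (2*x-1) ∂(volume : Measure ℝ) = -(1/2) := by
  rw [show (fun x => betaDensity 0 x * (2*x-1))
      = fun x => betaDensity 0 x * (0*x^2 + 2*x + (-1)) from funext fun x => by ring,
    mval₀]
  norm_num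

lemma momD : ∫ x, betaDensity 0 x * (2*x-1)^2 ∂(volume : Measure ℝ) = 1/2 := by
  rw [show (fun x => betaDensity 0 x * (2*x-1)^2)
      = fun x => betaDensity 0 x * (4*x^2 + (-4)*x + 1) from funext fun x => by ring,
    mval₀]
  norm_num

/-- Fake uniformity of the Cayley–LMR distribution: if `X₁ ~ Beta(3/2, 3/2)` (the case
`κ = 1`) then `τ₂ = E(Z₁²) = 1/3`, the same value as in the Haar-measure case `κ = 0`,
i.e. as when `X₀ ~ Beta(1/2, 3/2)`, for which `E(Z₀²) = 1/3` as well.  Here, as always,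
`Tᵢ` is uniform on `[-1,1]` and independent of `Xᵢ`, and
`Zᵢ = Tᵢ² + (1 - Tᵢ²)(2Xᵢ - 1)`. -/
theorem fake_uniformity_cayleyLMR
    {Ω : Type*} [MeasurableSpace Ω] (P : Measure Ω) [IsProbabilityMeasure P]
    (X₁ T₁ X₀ T₀ : Ω → ℝ)
    (hX₁ : Measurable X₁) (hT₁ : Measurable T₁)
    (hX₀ : Measurable X₀) (hT₀ : Measurable T₀)
    (hX₁_range : ∀ ω, X₁ ω ∈ Set.Icc (0 : ℝ) 1)
    (hX₀_range : ∀ ω, X₀ ω ∈ Set.Icc (0 : ℝ) 1)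
    (hT₁_unif : Measure.map T₁ P = (2 : ℝ≥0∞)⁻¹ • volume.restrict (Set.Icc (-1 : ℝ) 1))
    (hT₀_unif : Measure.map T₀ P = (2 : ℝ≥0∞)⁻¹ • volume.restrict (Set.Icc (-1 : ℝ) 1))
    (hindep₁ : ProbabilityTheory.IndepFun X₁ T₁ P)
    (hindep₀ : ProbabilityTheory.IndepFun X₀ T₀ P)
    (hX₁_law : Measure.map X₁ P = volume.withDensity fun x => ENNReal.ofReal (betaDensity 1 x))
    (hX₀_law : Measure.map X₀ P = volume.withDensity fun x => ENNReal.ofReal (betaDensity 0 x)) :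
    (∫ ω, (T₁ ω ^ 2 + (1 - T₁ ω ^ 2) * (2 * X₁ ω - 1)) ^ 2 ∂P) = 1 / 3 ∧
      (∫ ω, (T₀ ω ^ 2 + (1 - T₀ ω ^ 2) * (2 * X₀ ω - 1)) ^ 2 ∂P) = 1 / 3 := by
  constructor
  · rw [key 1 zero_le_one P X₁ T₁ hX₁ hT₁ hX₁_range hT₁_unif hindep₁ hX₁_law,
      momA, momB]
    norm_num
  · rw [key 0 le_rfl P X₀ T₀ hX₀ hT₀ hX₀_range hT₀_unif hindep₀ hX₀_law,
      momC, momD]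
    norm_num
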